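/- With the norms ‖·‖ and |||·||| on c₀ defined via Q(x,j) as above, for every x ∈ c₀ and every ε > 0 there exist m ∈ ℕ and δ > 0 such that for all y ∈ ℓ_∞ with sup_{k>m} |y(k)| > ε, one has max{‖x+y‖, ‖x−y‖} ≥ ‖x‖ + δ. -/

import Mathlib

open Filter Topology BoundedContinuousFunction

/-- `Q(x,j)` for a strictly increasing sequence `j` truncated at index `p`. -/
noncomputable def Qfun (x : ℕ →ᵇ ℝ) (j : ℕ → ℕ) (p : ℕ) : ℝ :=
  |x (j 0)| + ∑ k ∈ Finset.Icc 1 p, (1/2 : ℝ) ^ k * max (x (j k)) 0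

/-- `‖x‖ = sup_j Q(x,j)`. -/
noncomputable def NrmQ (x : ℕ →ᵇ ℝ) : ℝ :=
  sSup {r : ℝ | ∃ (j : ℕ → ℕ) (p : ℕ), StrictMono j ∧ r = Qfun x j p}

lemma geom_Ioc_eq (q : ℕ) : ∀ p, ∑ k ∈ Finset.Ioc q p, ((1:ℝ)/2) ^ k = (1/2)^q - (1/2)^(max q p)
  | 0 => by simp
  | (p+1) => by
    rcases le_or_gt q p with h | h
    · rw [Finset.sum_Ioc_succ_top h, geom_Ioc_eq q p, max_eq_right h,
        max_eq_right (le_trans h p.le_succ)]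
      rw [pow_succ]; ring
    · rw [Finset.Ioc_eq_empty (by omega), max_eq_left (by omega)]
      simp

lemma geom_Ioc_le (q p : ℕ) : ∑ k ∈ Finset.Ioc q p, ((1:ℝ)/2) ^ k ≤ (1/2)^q := by
  rw [geom_Ioc_eq]
  have : (0:ℝ) ≤ (1/2)^(max q p) := by positivity
  linarith

lemma Qfun_trunc (x : ℕ →ᵇ ℝ) (j : ℕ → ℕ) (p q : ℕ) (hqp : q ≤ p) (η : ℝ) (hη : 0 ≤ η)
    (h : ∀ i, q < i → i ≤ p → max (x (j i)) 0 ≤ η) :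
    Qfun x j p ≤ Qfun x j q + (1/2)^q * η := by
  unfold Qfun
  rw [show Finset.Icc 1 p = Finset.Ioc 0 p from Finset.Icc_add_one_left_eq_Ioc 0 p,
    show Finset.Icc 1 q = Finset.Ioc 0 q from Finset.Icc_add_one_left_eq_Ioc 0 q,
    ← Finset.sum_Ioc_consecutive _ (Nat.zero_le q) hqp]
  have key : ∑ k ∈ Finset.Ioc q p, (1/2:ℝ)^k * max (x (j k)) 0 ≤ (1/2)^q * η := by
    calc ∑ k ∈ Finset.Ioc q p, (1/2:ℝ)^k * max (x (j k)) 0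
        ≤ ∑ k ∈ Finset.Ioc q p, (1/2:ℝ)^k * η := by
          refine Finset.sum_le_sum fun i hi => ?_
          obtain ⟨h1, h2⟩ := Finset.mem_Ioc.1 hi
          exact mul_le_mul_of_nonneg_left (h i h1 h2) (by positivity)
      _ = (∑ k ∈ Finset.Ioc q p, ((1:ℝ)/2)^k) * η := by rw [Finset.sum_mul]
      _ ≤ (1/2)^q * η := mul_le_mul_of_nonneg_right (geom_Ioc_le q p) hη
  linarith

lemma Qfun_superadd (x z z' : ℕ →ᵇ ℝ) (h : ∀ n, z n + z' n = 2 * x n) (j : ℕ → ℕ) (p : ℕ) :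
    2 * Qfun x j p ≤ Qfun z j p + Qfun z' j p := by
  unfold Qfun
  have habs : 2 * |x (j 0)| ≤ |z (j 0)| + |z' (j 0)| := by
    have h2 := abs_add_le (z (j 0)) (z' (j 0))
    rw [h (j 0)] at h2
    rw [abs_mul] at h2
    simp only [abs_two] at h2
    linarith
  have hsum : ∀ i ∈ Finset.Icc 1 p, 2 * ((1/2:ℝ)^i * max (x (j i)) 0)
      ≤ (1/2:ℝ)^i * max (z (j i)) 0 + (1/2:ℝ)^i * max (z' (j i)) 0 := by
    intro i _
    have h1 : 2 * max (x (j i)) 0 ≤ max (z (j i)) 0 + max (z' (j i)) 0 := by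
      have hm : max (2 * x (j i)) 0 ≤ max (z (j i)) 0 + max (z' (j i)) 0 := by
        rw [← h (j i)]
        refine max_le (add_le_add (le_max_left _ _) (le_max_left _ _)) ?_
        have := le_max_right (z (j i)) 0
        have := le_max_right (z' (j i)) 0
        linarith
      have he : 2 * max (x (j i)) 0 = max (2 * x (j i)) 0 := by
        rcases le_total (x (j i)) 0 with h' | h'
        · rw [max_eq_right h', max_eq_right (by linarith)]; ring
        · rw [max_eq_left h', max_eq_left (by linarith)]
      linarith [he ▸ hm]
    calc 2 * ((1/2:ℝ)^i * max (x (j i)) 0) = (1/2:ℝ)^i * (2 * max (x (j i)) 0) := by ring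
      _ ≤ (1/2:ℝ)^i * (max (z (j i)) 0 + max (z' (j i)) 0) :=
          mul_le_mul_of_nonneg_left h1 (by positivity)
      _ = _ := by ring
  have hs := Finset.sum_le_sum hsum
  rw [← Finset.mul_sum, Finset.sum_add_distrib] at hs
  linarith

lemma Qfun_le_two_norm (x : ℕ →ᵇ ℝ) (j : ℕ → ℕ) (p : ℕ) : Qfun x j p ≤ 2 * ‖x‖ := by
  unfold Qfun
  have h0 : |x (j 0)| ≤ ‖x‖ := by
    have := x.norm_coe_le_norm (j 0); rwa [Real.norm_eq_abs] at this
  have habs : ∀ n : ℕ, max (x n) 0 ≤ ‖x‖ := by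
    intro n
    have := x.norm_coe_le_norm n; rw [Real.norm_eq_abs] at this
    exact max_le (le_trans (le_abs_self _) this) (norm_nonneg x)
  have hs : ∑ k ∈ Finset.Icc 1 p, (1/2:ℝ)^k * max (x (j k)) 0 ≤ ‖x‖ := by
    calc ∑ k ∈ Finset.Icc 1 p, (1/2:ℝ)^k * max (x (j k)) 0
        ≤ ∑ k ∈ Finset.Icc 1 p, (1/2:ℝ)^k * ‖x‖ :=
          Finset.sum_le_sum fun i _ => mul_le_mul_of_nonneg_left (habs _) (by positivity)
      _ = (∑ k ∈ Finset.Icc 1 p, ((1:ℝ)/2)^k) * ‖x‖ := by rw [Finset.sum_mul]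
      _ ≤ 1 * ‖x‖ := by
          refine mul_le_mul_of_nonneg_right ?_ (norm_nonneg x)
          have := geom_Ioc_le 0 p
          rw [pow_zero] at this
          rwa [show Finset.Icc 1 p = Finset.Ioc 0 p from Finset.Icc_add_one_left_eq_Ioc 0 p]
      _ = ‖x‖ := one_mul _
  linarith

lemma NrmQ_bddAbove (x : ℕ →ᵇ ℝ) :
    BddAbove {r : ℝ | ∃ (j : ℕ → ℕ) (p : ℕ), StrictMono j ∧ r = Qfun x j p} := by
  refine ⟨2 * ‖x‖, ?_⟩
  rintro r ⟨j, p, hj, rfl⟩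
  exact Qfun_le_two_norm x j p

lemma Qfun_le_NrmQ (x : ℕ →ᵇ ℝ) (j : ℕ → ℕ) (p : ℕ) (hj : StrictMono j) :
    Qfun x j p ≤ NrmQ x :=
  le_csSup (NrmQ_bddAbove x) ⟨j, p, hj, rfl⟩

lemma exists_near (x : ℕ →ᵇ ℝ) (δ : ℝ) (hδ : 0 < δ) :
    ∃ j p, StrictMono j ∧ NrmQ x - δ < Qfun x j p := by
  have hne : {r : ℝ | ∃ (j : ℕ → ℕ) (p : ℕ), StrictMono j ∧ r = Qfun x j p}.Nonempty :=
    ⟨Qfun x id 0, id, 0, strictMono_id, rfl⟩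
  obtain ⟨r, ⟨j, p, hj, rfl⟩, hr⟩ :=
    exists_lt_of_lt_csSup hne (show NrmQ x - δ < NrmQ x by linarith)
  exact ⟨j, p, hj, hr⟩

lemma Qfun_ext (z : ℕ →ᵇ ℝ) (j j' : ℕ → ℕ) (q k : ℕ)
    (hagree : ∀ i, i ≤ q → j' i = j i) (hk : j' (q+1) = k) :
    Qfun z j' (q+1) = Qfun z j q + (1/2)^(q+1) * max (z k) 0 := by
  unfold Qfun
  rw [Finset.sum_Icc_succ_top (by omega : 1 ≤ q+1), hagree 0 (Nat.zero_le q), hk]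
  have he : ∑ i ∈ Finset.Icc 1 q, (1/2:ℝ)^i * max (z (j' i)) 0
      = ∑ i ∈ Finset.Icc 1 q, (1/2:ℝ)^i * max (z (j i)) 0 :=
    Finset.sum_congr rfl fun i hi => by rw [hagree i (Finset.mem_Icc.1 hi).2]
  rw [he]; ring

lemma max_abs_le (a : ℝ) : max a 0 ≤ |a| := max_le (le_abs_self a) (abs_nonneg a)

lemma aux_main (x z z' : ℕ →ᵇ ℝ) (ε : ℝ) (hε : 0 < ε) (m k : ℕ)
    (hm : ∀ n, m < n → |x n| < ε/32) (hk : m < k)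
    (hzz' : ∀ n, z n + z' n = 2 * x n) (hzk : ε - ε/32 ≤ z k) :
    NrmQ x + (1/2)^m * (ε/16) ≤ max (NrmQ z) (NrmQ z') := by
  set M := max (NrmQ z) (NrmQ z') with hM
  have hηpos : (0:ℝ) ≤ ε/32 := by positivity
  obtain ⟨j, p, hj, hQ⟩ := exists_near x ((1/2)^m * (ε/32)) (by positivity)
  set p' := min p m with hp'
  have hp'm : p' ≤ m := min_le_right p m
  have hjge : ∀ i : ℕ, i ≤ j i := fun i => hj.le_apply
  have hN : NrmQ x ≤ Qfun x j p' + (1/2)^m * (ε/32) + (1/2)^m * (ε/32) := by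
    rcases le_or_gt p m with h | h
    · have : p' = p := min_eq_left h
      rw [this]
      have : (0:ℝ) ≤ (1/2)^m * (ε/32) := by positivity
      linarith
    · have hp'e : p' = m := min_eq_right h.le
      have ht : Qfun x j p ≤ Qfun x j p' + (1/2)^m * (ε/32) := by
        rw [hp'e]
        refine Qfun_trunc x j p m h.le _ hηpos fun i hi _ => ?_
        have : m < j i := lt_of_lt_of_le hi (hjge i)
        exact le_of_lt (lt_of_le_of_lt (max_abs_le _) (hm _ this))
      linarith
  by_cases hcase : j 0 < k
  · -- main case: insert k after position q
    set q := Nat.findGreatest (fun i => j i < k) p' with hq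
    have hqp' : q ≤ p' := Nat.findGreatest_le p'
    have hPq : j q < k :=
      Nat.findGreatest_spec (P := fun i => j i < k) (Nat.zero_le p') hcase
    have hgt : ∀ i, q < i → i ≤ p' → k ≤ j i := by
      intro i h1 h2
      by_contra hc
      push_neg at hc
      exact Nat.findGreatest_is_greatest h1 h2 hc
    have htr : Qfun x j p' ≤ Qfun x j q + (1/2)^q * (ε/32) := by
      refine Qfun_trunc x j p' q hqp' _ hηpos fun i h1 h2 => ?_
      have : m < j i := lt_of_lt_of_le hk (hgt i h1 h2)
      exact le_of_lt (lt_of_le_of_lt (max_abs_le _) (hm _ this))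
    set j'' : ℕ → ℕ := fun i => if i ≤ q then j i else k + (i - (q+1)) with hj''def
    have hj'' : StrictMono j'' := by
      apply strictMono_nat_of_lt_succ
      intro n
      simp only [hj''def]
      rcases Nat.lt_trichotomy n q with h | h | h
      · rw [if_pos h.le, if_pos (by omega)]; exact hj (Nat.lt_succ_self n)
      · subst h; rw [if_pos le_rfl, if_neg (by omega)]
        simpa using hPq
      · rw [if_neg (by omega), if_neg (by omega)]; omega
    have hagree : ∀ i, i ≤ q → j'' i = j i := fun i hi => by simp [hj''def, hi]
    have hkval : j'' (q+1) = k := by simp [hj''def]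
    have hext := Qfun_ext z j j'' q k hagree hkval
    have h1 : Qfun z j'' (q+1) ≤ M := le_trans (Qfun_le_NrmQ z j'' _ hj'') (le_max_left _ _)
    have h2 : Qfun z' j q ≤ M := le_trans (Qfun_le_NrmQ z' j q hj) (le_max_right _ _)
    have h3 := Qfun_superadd x z z' hzz' j q
    have hmaxzk : ε - ε/32 ≤ max (z k) 0 := le_trans hzk (le_max_left _ _)
    have h9 : (1/2:ℝ)^q * (1/2) * (ε - ε/32) ≤ (1/2:ℝ)^q * (1/2) * max (z k) 0 :=
      mul_le_mul_of_nonneg_left hmaxzk (by positivity)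
    rw [pow_succ] at hext
    have hba : ((1:ℝ)/2)^m * ε ≤ ((1:ℝ)/2)^q * ε := by
      refine mul_le_mul_of_nonneg_right ?_ hε.le
      exact pow_le_pow_of_le_one (by norm_num) (by norm_num) (le_trans hqp' hp'm)
    rw [hext] at h1
    have hbe : (0:ℝ) ≤ ((1:ℝ)/2)^m * ε := by positivity
    linarith
  · -- degenerate case: k ≤ j 0, so the whole of Q(x,j,p') is small
    push_neg at hcase
    have hsmall : Qfun x j p' ≤ ε/32 + ε/32 := by
      have h0 : Qfun x j p' ≤ Qfun x j 0 + (1/2)^0 * (ε/32) := by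
        refine Qfun_trunc x j p' 0 (Nat.zero_le p') _ hηpos fun i h1 _ => ?_
        have : m < j i := lt_of_lt_of_le (lt_of_lt_of_le hk hcase) (hj.monotone (Nat.zero_le i))
        exact le_of_lt (lt_of_le_of_lt (max_abs_le _) (hm _ this))
      have h00 : Qfun x j 0 = |x (j 0)| := by simp [Qfun]
      have hj0 : |x (j 0)| < ε/32 := hm _ (lt_of_lt_of_le hk hcase)
      rw [h00, pow_zero, one_mul] at h0
      linarith
    set jk : ℕ → ℕ := fun i => k + i with hjk
    have hjkm : StrictMono jk := by
      apply strictMono_nat_of_lt_succ; intro n; simp [hjk]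
    have hQzk : Qfun z jk 0 = |z k| := by simp [Qfun, hjk]
    have h1 : |z k| ≤ M := by
      rw [← hQzk]; exact le_trans (Qfun_le_NrmQ z jk 0 hjkm) (le_max_left _ _)
    have h2 : ε - ε/32 ≤ |z k| := le_trans hzk (le_abs_self _)
    have hb1 : ((1:ℝ)/2)^m * ε ≤ ε := by
      nlinarith [pow_le_one₀ (by norm_num : (0:ℝ) ≤ 1/2) (by norm_num : (1:ℝ)/2 ≤ 1) (n := m)]
    linarith

/-- Claim 4.2: for every `x ∈ c₀` and `ε > 0` there are `m` and `δ > 0` such that every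
`y ∈ ℓ∞` with `sup_{k>m} |y(k)| > ε` satisfies `max{‖x+y‖, ‖x−y‖} ≥ ‖x‖ + δ`. -/
theorem stmt17 (x : ℕ →ᵇ ℝ) (hx : Tendsto (⇑x) atTop (nhds 0)) :
    ∀ ε > (0 : ℝ), ∃ (m : ℕ) (δ : ℝ), 0 < δ ∧
      ∀ y : ℕ →ᵇ ℝ, (∃ k > m, ε < |y k|) →
        NrmQ x + δ ≤ max (NrmQ (x + y)) (NrmQ (x - y)) := by
  intro ε hε
  obtain ⟨m, hm⟩ : ∃ m : ℕ, ∀ n, m < n → |x n| < ε/32 := by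
    obtain ⟨N, hN⟩ := Metric.tendsto_atTop.1 hx (ε/32) (by positivity)
    exact ⟨N, fun n hn => by
      have := hN n hn.le
      rwa [Real.dist_eq, sub_zero] at this⟩
  refine ⟨m, (1/2)^m * (ε/16), by positivity, ?_⟩
  rintro y ⟨k, hk, hyk⟩
  have hxk := hm k hk
  have hxlb : -(ε/32) < x k := by
    have := abs_lt.1 hxk; linarith [this.1]
  rcases le_total 0 (y k) with hy | hy
  · have h1 : ∀ n, (x + y) n + (x - y) n = 2 * x n := by
      intro n; simp; ring
    have h2 : ε - ε/32 ≤ (x + y) k := by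
      have hyk' : ε < y k := by rwa [abs_of_nonneg hy] at hyk
      simp only [BoundedContinuousFunction.coe_add, Pi.add_apply]
      linarith
    exact aux_main x (x+y) (x-y) ε hε m k hm hk h1 h2
  · have h1 : ∀ n, (x - y) n + (x + y) n = 2 * x n := by
      intro n; simp; ring
    have h2 : ε - ε/32 ≤ (x - y) k := by
      have hyk' : ε < -(y k) := by rwa [abs_of_nonpos hy] at hyk
      simp only [BoundedContinuousFunction.coe_sub, Pi.sub_apply]
      linarith
    have := aux_main x (x-y) (x+y) ε hε m k hm hk h1 h2
    rwa [max_comm] at this
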